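/- In a Euclidean triangle with vertices i, j, τ* where the side from τ* to i has length r_i, the side from τ* to j has length r_j, and the angle at τ* equals π − Θ with Θ ∈ (0,π), the inner angle θ_i at vertex i satisfies r_j · ∂θ_i/∂r_j = r_i · ∂θ_j/∂r_i, and both equal d/l > 0, where l is the length of side ij and d is the distance from τ* to the line through i and j. -/

import Mathlib

open Real

noncomputable def eL (Θ ri rj : ℝ) : ℝ := Real.sqrt (ri ^ 2 + rj ^ 2 + 2 * ri * rj * Real.cos Θ)

/-- Inner angle at vertex `i` of the Euclidean triangle with sides `ri, rj` from the apex
`τ*`, apex angle `π − Θ`, opposite side `eL Θ ri rj` (law of cosines). -/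
noncomputable def eθi (Θ ri rj : ℝ) : ℝ :=
  Real.arccos ((ri ^ 2 + (eL Θ ri rj) ^ 2 - rj ^ 2) / (2 * ri * eL Θ ri rj))

noncomputable def eθj (Θ ri rj : ℝ) : ℝ :=
  Real.arccos ((rj ^ 2 + (eL Θ ri rj) ^ 2 - ri ^ 2) / (2 * rj * eL Θ ri rj))

lemma key (ri rj Θ : ℝ) (hri : 0 < ri) (hrj : 0 < rj) (hs : 0 < Real.sin Θ) :
    HasDerivAt (fun y => eθi Θ ri y)
      (ri * Real.sin Θ / (ri ^ 2 + rj ^ 2 + 2 * ri * rj * Real.cos Θ)) rj := by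
  set Q : ℝ → ℝ := fun y => ri ^ 2 + y ^ 2 + 2 * ri * y * Real.cos Θ with hQ
  have hpy : Real.sin Θ ^ 2 + Real.cos Θ ^ 2 = 1 := Real.sin_sq_add_cos_sq Θ
  have hQpos : ∀ y, 0 < Q y := by
    intro y
    simp only [hQ]
    nlinarith [sq_nonneg (y + ri * Real.cos Θ), mul_pos (mul_pos hri hri) (mul_pos hs hs)]
  have hLpos : ∀ y, 0 < Real.sqrt (Q y) := fun y => Real.sqrt_pos.mpr (hQpos y)
  have hL2 : ∀ y, Real.sqrt (Q y) ^ 2 = Q y := fun y => Real.sq_sqrt (hQpos y).le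
  set u : ℝ → ℝ := fun y => (ri + y * Real.cos Θ) / Real.sqrt (Q y) with hu
  have heq : ∀ y, eθi Θ ri y = Real.arccos (u y) := by
    intro y
    unfold eθi eL
    congr 1
    rw [hu]
    have h2 := hL2 y
    simp only [hQ] at h2 ⊢
    rw [h2]
    have hLy := hLpos y
    simp only [hQ] at hLy
    field_simp
    ring
  have hQ' : HasDerivAt Q (2 * rj + 2 * ri * Real.cos Θ) rj := by
    have h1 : HasDerivAt (fun y : ℝ => y ^ 2) (2 * rj) rj := by
      simpa using hasDerivAt_pow 2 rj
    have h2 : HasDerivAt (fun y : ℝ => 2 * ri * y * Real.cos Θ) (2 * ri * Real.cos Θ) rj := by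
      simpa using ((hasDerivAt_id rj).const_mul (2 * ri)).mul_const (Real.cos Θ)
    exact (h1.const_add (ri ^ 2)).add h2
  have hsqrt : HasDerivAt (fun y => Real.sqrt (Q y))
      ((2 * rj + 2 * ri * Real.cos Θ) / (2 * Real.sqrt (Q rj))) rj :=
    hQ'.sqrt (hQpos rj).ne'
  have hnum : HasDerivAt (fun y => ri + y * Real.cos Θ) (Real.cos Θ) rj := by
    simpa using ((hasDerivAt_id rj).mul_const (Real.cos Θ)).const_add ri
  have hu' : HasDerivAt u
      ((Real.cos Θ * Real.sqrt (Q rj) - (ri + rj * Real.cos Θ) *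
        ((2 * rj + 2 * ri * Real.cos Θ) / (2 * Real.sqrt (Q rj)))) / Real.sqrt (Q rj) ^ 2) rj :=
    hnum.div hsqrt (hLpos rj).ne'
  have hL2' : Real.sqrt (Q rj) ^ 2 = ri ^ 2 + rj ^ 2 + 2 * ri * rj * Real.cos Θ := by
    rw [hL2 rj]
  have hsq : 1 - u rj ^ 2 = (rj * Real.sin Θ / Real.sqrt (Q rj)) ^ 2 := by
    rw [hu]
    have hLne := (hLpos rj).ne'
    field_simp
    linear_combination hL2' - rj^2 * hpy
  have husq : u rj ^ 2 < 1 := by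
    have h0 : 0 < rj * Real.sin Θ / Real.sqrt (Q rj) :=
      div_pos (mul_pos hrj hs) (hLpos rj)
    nlinarith [hsq]
  have h1 : u rj ≠ -1 := by intro h; rw [h] at husq; norm_num at husq
  have h2 : u rj ≠ 1 := by intro h; rw [h] at husq; norm_num at husq
  have harc : HasDerivAt (fun y => Real.arccos (u y))
      (-(1 / Real.sqrt (1 - u rj ^ 2)) * _) rj :=
    (Real.hasDerivAt_arccos h1 h2).comp rj hu'
  have hfun : (fun y => eθi Θ ri y) = fun y => Real.arccos (u y) := funext heq
  rw [hfun]
  convert harc using 1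
  rw [hsq, Real.sqrt_sq (by positivity)]
  have hLne := (hLpos rj).ne'
  have hQne : (ri ^ 2 + rj ^ 2 + 2 * ri * rj * Real.cos Θ) ≠ 0 := by
    have := hQpos rj; simp only [hQ] at this; exact this.ne'
  field_simp
  rw [hL2', show ri ^ 2 + rj ^ 2 + ri * rj * 2 * Real.cos Θ = ri ^ 2 + rj ^ 2 + 2 * ri * rj * Real.cos Θ by ring,
    mul_div_assoc, div_self hQne]
  linear_combination ri * rj * hpy

lemma eθj_swap (Θ x rj : ℝ) : eθj Θ x rj = eθi Θ rj x := by
  unfold eθj eθi eL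
  rw [show x ^ 2 + rj ^ 2 + 2 * x * rj * Real.cos Θ
      = rj ^ 2 + x ^ 2 + 2 * rj * x * Real.cos Θ by ring]

theorem euclidean_angle_derivative_symmetry
    (ri rj Θ : ℝ) (hri : 0 < ri) (hrj : 0 < rj)
    (hΘ : Θ ∈ Set.Ioo 0 π)
    (d l : ℝ) (hl : l = eL Θ ri rj) (hd : d = ri * rj * Real.sin Θ / l) :
    rj * deriv (fun y => eθi Θ ri y) rj = d / l ∧
    ri * deriv (fun x => eθj Θ x rj) ri = d / l ∧
    0 < d / l := by
  have hs : 0 < Real.sin Θ := Real.sin_pos_of_pos_of_lt_pi hΘ.1 hΘ.2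
  have hpy : Real.sin Θ ^ 2 + Real.cos Θ ^ 2 = 1 := Real.sin_sq_add_cos_sq Θ
  have hQpos : 0 < ri ^ 2 + rj ^ 2 + 2 * ri * rj * Real.cos Θ := by
    nlinarith [sq_nonneg (rj + ri * Real.cos Θ), mul_pos (mul_pos hri hri) (mul_pos hs hs)]
  have hlpos : 0 < l := by rw [hl]; exact Real.sqrt_pos.mpr hQpos
  have hl2 : l ^ 2 = ri ^ 2 + rj ^ 2 + 2 * ri * rj * Real.cos Θ := by
    rw [hl]; exact Real.sq_sqrt hQpos.le
  have hdl : d / l = ri * rj * Real.sin Θ / (ri ^ 2 + rj ^ 2 + 2 * ri * rj * Real.cos Θ) := by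
    rw [hd, ← hl2]
    field_simp
  have h1 := (key ri rj Θ hri hrj hs).deriv
  have h2 := (key rj ri Θ hrj hri hs).deriv
  refine ⟨?_, ?_, ?_⟩
  · rw [h1, hdl]; field_simp
  · have : (fun x => eθj Θ x rj) = fun x => eθi Θ rj x := funext fun x => eθj_swap Θ x rj
    rw [this, h2, hdl]
    rw [show rj ^ 2 + ri ^ 2 + 2 * rj * ri * Real.cos Θ
        = ri ^ 2 + rj ^ 2 + 2 * ri * rj * Real.cos Θ by ring]
    field_simp
  · rw [hdl]; positivity
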